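/- arXiv:1308.3155 — 2 statements merged into one kernel-verified Lean document; each statement's English description precedes it below -/
import Mathlib

section
/- Let D(a) = A(a)·B(a)·C(a) where A, B, C are {0,1}-valued. If for all n, P(∩_{i=1}^n {A(a_i)=0}) ≤ p_1^n, P(∩_{i=1}^n {B(a_i)=0}) ≤ p_2^n, and P(∩_{i=1}^n {C(a_i)=0}) ≤ p_3^n, then P(∩_{i=1}^n {D(a_i)=0}) ≤ (√p_1 + p_2^{1/4} + p_3^{1/4})^n. -/
open MeasureTheory
open scoped ENNReal

/-- If the probability of `n` distinct failures of `X` is at most `p^n`, then the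
probability of failures over any finite subset of indices is at most `p^card`. -/
lemma aux_subset_bound {Ω ι : Type*} [MeasurableSpace Ω] (P : Measure Ω)
    (X : ι → Ω → ℕ) (p : ℝ≥0∞)
    (hp : ∀ (n : ℕ) (a : Fin n → ι), Function.Injective a →
      P (⋂ i, {ω | X (a i) ω = 0}) ≤ p ^ n)
    {n : ℕ} (a : Fin n → ι) (ha : Function.Injective a) (s : Finset (Fin n)) :
    P (⋂ i ∈ s, {ω | X (a i) ω = 0}) ≤ p ^ s.card := by
  classical
  set e := s.equivFin with he
  have hb : Function.Injective (fun j : Fin s.card => a ((e.symm j : s) : Fin n)) := by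
    intro j₁ j₂ h
    exact e.symm.injective (Subtype.ext (ha h))
  have hEq : (⋂ j : Fin s.card, {ω | X (a ((e.symm j : s) : Fin n)) ω = 0}) =
      ⋂ i ∈ s, {ω | X (a i) ω = 0} := by
    rw [e.symm.surjective.iInter_comp (fun i : s => {ω | X (a (i : Fin n)) ω = 0})]
    ext ω
    simp
  rw [← hEq]
  exact hp s.card _ hb

/-- Proposition 3 of Dousse et al.: if `D = A·B·C` with `A,B,C` `{0,1}`-valued and
the probability of `n` distinct failures of `A` (resp. `B`, `C`) is at most
`p₁ⁿ` (resp. `p₂ⁿ`, `p₃ⁿ`), then the probability of `n` distinct failures of `D`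
is at most `(√p₁ + p₂^{1/4} + p₃^{1/4})ⁿ`. -/
theorem stmt_4 {Ω ι : Type*} [MeasurableSpace Ω] (P : Measure Ω) [IsProbabilityMeasure P]
    (A B C D : ι → Ω → ℕ)
    (hA01 : ∀ a ω, A a ω = 0 ∨ A a ω = 1) (hB01 : ∀ a ω, B a ω = 0 ∨ B a ω = 1)
    (hC01 : ∀ a ω, C a ω = 0 ∨ C a ω = 1)
    (hD : ∀ a ω, D a ω = A a ω * B a ω * C a ω)
    (p₁ p₂ p₃ : ℝ≥0∞)
    (hpA : ∀ (n : ℕ) (a : Fin n → ι), Function.Injective a →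
      P (⋂ i, {ω | A (a i) ω = 0}) ≤ p₁ ^ n)
    (hpB : ∀ (n : ℕ) (a : Fin n → ι), Function.Injective a →
      P (⋂ i, {ω | B (a i) ω = 0}) ≤ p₂ ^ n)
    (hpC : ∀ (n : ℕ) (a : Fin n → ι), Function.Injective a →
      P (⋂ i, {ω | C (a i) ω = 0}) ≤ p₃ ^ n) :
    ∀ (n : ℕ) (a : Fin n → ι), Function.Injective a →
      P (⋂ i, {ω | D (a i) ω = 0}) ≤
        (p₁ ^ ((1 : ℝ) / 2) + p₂ ^ ((1 : ℝ) / 4) + p₃ ^ ((1 : ℝ) / 4)) ^ n := by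
  classical
  intro n a ha
  set F : Fin 3 → ι → Ω → ℕ := ![A, B, C] with hF
  set p : Fin 3 → ℝ≥0∞ := ![p₁, p₂, p₃] with hp
  set w : Fin 3 → ℝ := ![1/2, 1/4, 1/4] with hw
  set q : Fin 3 → ℝ≥0∞ := fun j => p j ^ w j with hq
  have hwnn : ∀ j, 0 ≤ w j := by
    intro j; fin_cases j <;> norm_num [hw]
  have hP : ∀ j : Fin 3, ∀ (k : ℕ) (b : Fin k → ι), Function.Injective b →
      P (⋂ i, {ω | F j (b i) ω = 0}) ≤ p j ^ k := by
    intro j; fin_cases j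
    · simpa [hF, hp] using hpA
    · simpa [hF, hp] using hpB
    · simpa [hF, hp] using hpC
  -- Decompose the event
  have hsub : (⋂ i, {ω | D (a i) ω = 0}) ⊆
      ⋃ f : Fin n → Fin 3, ⋂ i, {ω | F (f i) (a i) ω = 0} := by
    intro ω hω
    have h0 : ∀ i, A (a i) ω = 0 ∨ B (a i) ω = 0 ∨ C (a i) ω = 0 := by
      intro i
      have hmem : D (a i) ω = 0 := Set.mem_iInter.mp hω i
      rw [hD] at hmem
      rcases Nat.mul_eq_zero.mp hmem with h | h
      · rcases Nat.mul_eq_zero.mp h with h | h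
        exacts [Or.inl h, Or.inr (Or.inl h)]
      · exact Or.inr (Or.inr h)
    refine Set.mem_iUnion.mpr
      ⟨fun i => if A (a i) ω = 0 then 0 else if B (a i) ω = 0 then 1 else 2, ?_⟩
    refine Set.mem_iInter.mpr fun i => ?_
    by_cases h1 : A (a i) ω = 0
    · simp [h1, hF]
    · by_cases h2 : B (a i) ω = 0
      · simp [h1, h2, hF]
      · have h3 := ((h0 i).resolve_left h1).resolve_left h2
        simp [h1, h2, h3, hF]
  -- per-function bound
  have hf : ∀ f : Fin n → Fin 3,
      P (⋂ i, {ω | F (f i) (a i) ω = 0}) ≤ ∏ i, q (f i) := by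
    intro f
    set k : Fin 3 → ℕ := fun j => (Finset.univ.filter (fun i => f i = j)).card with hk
    have key : ∀ j : Fin 3, P (⋂ i, {ω | F (f i) (a i) ω = 0}) ≤ p j ^ k j := by
      intro j
      refine le_trans (measure_mono ?_) (aux_subset_bound P (F j) (p j) (hP j) a ha _)
      intro ω hω
      refine Set.mem_iInter₂.mpr fun i hi => ?_
      have hji : f i = j := (Finset.mem_filter.mp hi).2
      have := Set.mem_iInter.mp hω i
      rwa [hji] at this
    have hprod : ∏ i, q (f i) = ∏ j : Fin 3, (q j) ^ (k j) := by
      rw [Finset.prod_comp]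
      refine Finset.prod_subset (Finset.subset_univ _) ?_
      intro j _ hj
      have : (Finset.univ.filter (fun i => f i = j)) = ∅ := by
        rw [Finset.filter_eq_empty_iff]
        intro i _ hfi
        exact hj (Finset.mem_image.mpr ⟨i, Finset.mem_univ i, hfi⟩)
      simp [hk, this]
    rw [hprod]
    by_cases h0 : P (⋂ i, {ω | F (f i) (a i) ω = 0}) = 0
    · rw [h0]; exact zero_le
    have hne : P (⋂ i, {ω | F (f i) (a i) ω = 0}) ≠ ⊤ := measure_ne_top P _
    have hself : P (⋂ i, {ω | F (f i) (a i) ω = 0}) =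
        ∏ j : Fin 3, (P (⋂ i, {ω | F (f i) (a i) ω = 0})) ^ (w j) := by
      rw [Fin.prod_univ_three, ← ENNReal.rpow_add _ _ h0 hne,
        ← ENNReal.rpow_add _ _ h0 hne]
      norm_num [hw, Matrix.cons_val_two]
    rw [hself]
    refine Finset.prod_le_prod' fun j _ => ?_
    calc (P (⋂ i, {ω | F (f i) (a i) ω = 0})) ^ (w j)
        ≤ (p j ^ k j) ^ (w j) := ENNReal.rpow_le_rpow (key j) (hwnn j)
      _ = (q j) ^ (k j) := by
          rw [hq, ← ENNReal.rpow_natCast (p j) (k j), ← ENNReal.rpow_mul,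
            mul_comm, ENNReal.rpow_mul, ENNReal.rpow_natCast]
  -- summation
  calc P (⋂ i, {ω | D (a i) ω = 0})
      ≤ P (⋃ f : Fin n → Fin 3, ⋂ i, {ω | F (f i) (a i) ω = 0}) := measure_mono hsub
    _ ≤ ∑' f : Fin n → Fin 3, P (⋂ i, {ω | F (f i) (a i) ω = 0}) := measure_iUnion_le _
    _ = ∑ f : Fin n → Fin 3, P (⋂ i, {ω | F (f i) (a i) ω = 0}) := tsum_fintype _
    _ ≤ ∑ f : Fin n → Fin 3, ∏ i, q (f i) := Finset.sum_le_sum fun f _ => hf f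
    _ = ∏ i : Fin n, ∑ j : Fin 3, q j := by
        rw [Finset.prod_univ_sum]
        simp [Fintype.piFinset_univ]
    _ = (∑ j : Fin 3, q j) ^ n := by
        rw [Finset.prod_const, Finset.card_univ, Fintype.card_fin]
    _ = (p₁ ^ ((1 : ℝ) / 2) + p₂ ^ ((1 : ℝ) / 4) + p₃ ^ ((1 : ℝ) / 4)) ^ n := by
        rw [Fin.sum_univ_three]
        simp [hq, hp, hw]
end

section
/- Let B_N be the square [−N/2, N/2]² and suppose G_E and G_L are two planar graphs (edge sets of segments in ℝ²) such that no edge of G_L crosses any edge of G_E. If G_E contains both a left-to-right crossing and a top-to-bottom crossing of B_N, then G_L cannot contain both a left-to-right crossing and a top-to-bottom crossing of B_N. -/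
/-- The box `B_N = [-N/2, N/2]²`. -/
def boxN (N : ℝ) : Set (ℝ × ℝ) :=
  Set.Icc (-(N / 2)) (N / 2) ×ˢ Set.Icc (-(N / 2)) (N / 2)

/-- `G` (a set of plane segments given by their endpoint pairs) contains a
left-to-right crossing of the box `B_N`: a polygonal path of edges of `G`, lying
in the box, from the left side to the right side. -/
def HasLRCrossing (G : Set ((ℝ × ℝ) × (ℝ × ℝ))) (N : ℝ) : Prop :=
  ∃ (k : ℕ) (v : Fin (k + 1) → ℝ × ℝ),
    (∀ i : Fin k, (v i.castSucc, v i.succ) ∈ G ∨ (v i.succ, v i.castSucc) ∈ G) ∧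
    (∀ i : Fin k, segment ℝ (v i.castSucc) (v i.succ) ⊆ boxN N) ∧
    (v 0).1 = -(N / 2) ∧ (v (Fin.last k)).1 = N / 2 ∧ v 0 ∈ boxN N ∧ v (Fin.last k) ∈ boxN N

/-- Top-to-bottom crossing of the box `B_N`. -/
def HasTBCrossing (G : Set ((ℝ × ℝ) × (ℝ × ℝ))) (N : ℝ) : Prop :=
  ∃ (k : ℕ) (v : Fin (k + 1) → ℝ × ℝ),
    (∀ i : Fin k, (v i.castSucc, v i.succ) ∈ G ∨ (v i.succ, v i.castSucc) ∈ G) ∧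
    (∀ i : Fin k, segment ℝ (v i.castSucc) (v i.succ) ⊆ boxN N) ∧
    (v 0).2 = N / 2 ∧ (v (Fin.last k)).2 = -(N / 2) ∧ v 0 ∈ boxN N ∧ v (Fin.last k) ∈ boxN N


open Complex Finset Real

noncomputable def unitc (u : ℂ) : ℂ := u / (‖u‖)

noncomputable def dtheta (u v : ℂ) : ℝ := Complex.arg (v / u)

lemma unitc_eq_exp {w : ℂ} (hw : w ≠ 0) : unitc w = Complex.exp (w.arg * I) := by
  have h := Complex.norm_mul_exp_arg_mul_I w
  have ha : (‖w‖ : ℂ) ≠ 0 := by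
    exact_mod_cast (norm_ne_zero_iff.mpr hw)
  rw [unitc, div_eq_iff ha]
  linear_combination -h

lemma unitc_ne_zero {w : ℂ} (hw : w ≠ 0) : unitc w ≠ 0 := by
  rw [unitc]
  have ha : (‖w‖ : ℂ) ≠ 0 := by exact_mod_cast (norm_ne_zero_iff.mpr hw)
  exact div_ne_zero hw ha

lemma ratio_re_pos {u v : ℂ} (hu : u ≠ 0) (hv : v ≠ 0)
    (h : ‖v - u‖ < ‖u‖) : 0 < (v / u).re := by
  have h2 : Complex.normSq (v - u) < Complex.normSq u := by
    rw [← Complex.sq_norm, ← Complex.sq_norm]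
    exact pow_lt_pow_left₀ h (norm_nonneg _) (by norm_num)
  rw [Complex.normSq_sub] at h2
  have hvpos : 0 < Complex.normSq v := Complex.normSq_pos.2 hv
  have hnum : 0 < (v * (starRingEnd ℂ) u).re := by linarith
  have hmr : (v * (starRingEnd ℂ) u).re = v.re * u.re + v.im * u.im := by
    simp [Complex.mul_re, Complex.conj_re, Complex.conj_im]
  rw [hmr] at hnum
  have hupos : 0 < Complex.normSq u := Complex.normSq_pos.2 hu
  rw [Complex.normSq_apply] at hupos
  rw [Complex.div_re]
  rw [Complex.normSq_apply, ← add_div]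
  exact div_pos hnum hupos

lemma abs_dtheta_lt {u v : ℂ} (h : 0 < (v / u).re) : |dtheta u v| < π / 2 :=
  Complex.abs_arg_lt_pi_div_two_iff.2 (Or.inl h)

lemma ratio_rev_pos {u v : ℂ} (h : 0 < (v / u).re) : 0 < (u / v).re := by
  have hne : v / u ≠ 0 := by
    intro h0; rw [h0] at h; simp at h
  rw [show u / v = (v / u)⁻¹ by rw [inv_div], Complex.inv_re]
  exact div_pos h (Complex.normSq_pos.2 hne)

lemma dtheta_rev {u v : ℂ} (h : 0 < (v / u).re) : dtheta v u = - dtheta u v := by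
  have hne : v / u ≠ 0 := by intro h0; rw [h0] at h; simp at h
  have hvu : u / v = (v / u)⁻¹ := by rw [inv_div]
  have harg : Complex.arg (v / u) ≠ π := by
    intro hp
    have := abs_dtheta_lt h
    rw [dtheta, hp] at this
    rw [abs_of_pos Real.pi_pos] at this
    linarith [Real.pi_pos]
  rw [dtheta, dtheta, hvu, Complex.arg_inv, if_neg harg]

lemma unit_step {u v : ℂ} (hu : u ≠ 0) (hv : v ≠ 0) :
    unitc u * Complex.exp ((dtheta u v : ℝ) * I) = unitc v := by
  have hr : v / u ≠ 0 := div_ne_zero hv hu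
  have h := Complex.norm_mul_exp_arg_mul_I (v / u)
  have hau : (‖u‖ : ℂ) ≠ 0 := by exact_mod_cast (norm_ne_zero_iff.mpr hu)
  have hav : (‖v‖ : ℂ) ≠ 0 := by exact_mod_cast (norm_ne_zero_iff.mpr hv)
  have har : (‖v / u‖ : ℂ) ≠ 0 := by exact_mod_cast (norm_ne_zero_iff.mpr hr)
  have habs : (‖v / u‖ : ℂ) = (‖v‖ : ℂ) / (‖u‖ : ℂ) := by
    rw [norm_div]; push_cast; ring
  rw [dtheta, unitc, unitc]
  have hexp : Complex.exp ((Complex.arg (v/u) : ℝ) * I) = (v / u) / (‖v/u‖ : ℂ) := by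
    rw [eq_div_iff har]
    linear_combination h
  rw [hexp, habs]
  field_simp

lemma cos_band {x : ℝ} (h1 : -π < x) (h2 : x < π) (hc : 0 ≤ Real.cos x) :
    -(π / 2) ≤ x ∧ x ≤ π / 2 := by
  constructor
  · by_contra hx
    push_neg at hx
    have : Real.cos (-x) < 0 :=
      Real.cos_neg_of_pi_div_two_lt_of_lt (by linarith) (by linarith)
    rw [Real.cos_neg] at this; linarith
  · by_contra hx
    push_neg at hx
    have : Real.cos x < 0 :=
      Real.cos_neg_of_pi_div_two_lt_of_lt (by linarith) (by linarith)
    linarith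

/-- sign of real part of `w * c` read off from the unit vector `exp (θ I)`. -/
lemma re_mul_unitc {w : ℂ} (hw : w ≠ 0) (c : ℂ) {θ : ℝ}
    (hθ : Complex.exp ((θ : ℝ) * I) = unitc w) (h : 0 ≤ (w * c).re) :
    0 ≤ (Complex.exp ((θ : ℝ) * I) * c).re := by
  rw [hθ, unitc, div_mul_eq_mul_div]
  have : (w * c / (‖w‖ : ℂ)).re = (w * c).re / (‖w‖) := by
    rw [show (w*c) / (‖w‖ : ℂ) = ((‖w‖)⁻¹ : ℝ) • (w * c) by
      rw [Complex.real_smul]; push_cast; field_simp]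
    rw [Complex.smul_re]
    rw [smul_eq_mul, inv_mul_eq_div]
  rw [this]
  positivity

lemma side_lemma (α : ℝ) (w : ℕ → ℂ) (n : ℕ)
    (hw : ∀ k, k ≤ n → w k ≠ 0)
    (hadj : ∀ k, k < n → 0 < (w (k + 1) / w k).re)
    (hhalf : ∀ k, k ≤ n → 0 ≤ (w k * Complex.exp (-(α : ℂ) * I)).re)
    (θ0 : ℝ) (hθ0 : Complex.exp ((θ0 : ℝ) * I) = unitc (w 0))
    (hb1 : α - π / 2 ≤ θ0) (hb2 : θ0 ≤ α + π / 2) :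
    Complex.exp (((θ0 + ∑ k ∈ Finset.range n, dtheta (w k) (w (k + 1))) : ℝ) * I)
      = unitc (w n) ∧
    α - π / 2 ≤ θ0 + ∑ k ∈ Finset.range n, dtheta (w k) (w (k + 1)) ∧
    θ0 + ∑ k ∈ Finset.range n, dtheta (w k) (w (k + 1)) ≤ α + π / 2 := by
  induction n with
  | zero =>
    refine ⟨by simpa using hθ0, by simpa using hb1, by simpa using hb2⟩
  | succ n ih =>
    obtain ⟨ih1, ih2, ih3⟩ := ih (fun k hk => hw k (by omega))
      (fun k hk => hadj k (by omega)) (fun k hk => hhalf k (by omega))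
    set θ := θ0 + ∑ k ∈ Finset.range n, dtheta (w k) (w (k + 1)) with hθdef
    have hrat := hadj n (by omega)
    have hd1 := abs_lt.1 (abs_dtheta_lt hrat)
    have hsum : θ0 + ∑ k ∈ Finset.range (n + 1), dtheta (w k) (w (k + 1))
        = θ + dtheta (w n) (w (n + 1)) := by
      rw [Finset.sum_range_succ]; ring
    have hexp : Complex.exp (((θ + dtheta (w n) (w (n + 1))) : ℝ) * I)
        = unitc (w (n + 1)) := by
      push_cast
      rw [add_mul, Complex.exp_add, ih1]
      exact unit_step (hw n (by omega)) (hw (n + 1) (by omega))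
    have hcos : 0 ≤ Real.cos (θ + dtheta (w n) (w (n + 1)) - α) := by
      have h1 : Complex.exp (((θ + dtheta (w n) (w (n + 1)) - α) : ℝ) * I)
          = Complex.exp (((θ + dtheta (w n) (w (n + 1))) : ℝ) * I)
            * Complex.exp (-(α : ℂ) * I) := by
        rw [← Complex.exp_add]; congr 1; push_cast; ring
      have h2 := re_mul_unitc (hw (n + 1) (by omega)) (Complex.exp (-(α : ℂ) * I))
        hexp (hhalf (n + 1) (by omega))
      rw [← Complex.exp_ofReal_mul_I_re, h1]
      exact h2
    have hband := cos_band (x := θ + dtheta (w n) (w (n + 1)) - α)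
      (by linarith [Real.pi_pos]) (by linarith [Real.pi_pos]) hcos
    refine ⟨by rw [hsum]; exact hexp, by rw [hsum]; linarith [hband.1], by
      rw [hsum]; linarith [hband.2]⟩

lemma exp_real_eq_one {x : ℝ} (h : Complex.exp ((x : ℝ) * I) = 1) (hx : |x| < 2 * π) :
    x = 0 := by
  obtain ⟨n, hn⟩ := Complex.exp_eq_one_iff.1 h
  rw [show ((n : ℂ) * (2 * ↑π * I)) = ((n : ℂ) * (2 * ↑π)) * I by ring] at hn
  have hI : (x : ℂ) = (n : ℂ) * (2 * π) := mul_right_cancel₀ Complex.I_ne_zero hn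
  have hx2 : x = (n : ℝ) * (2 * π) := by exact_mod_cast hI
  have hpi := Real.pi_pos
  by_cases h0 : n = 0
  · rw [hx2, h0]; simp
  · have h1 : (1 : ℝ) ≤ |(n : ℝ)| := by
      have := Int.one_le_abs (by exact_mod_cast h0 : n ≠ 0)
      exact_mod_cast this
    have : |x| = |(n : ℝ)| * (2 * π) := by
      rw [hx2, abs_mul, abs_of_pos (show (0:ℝ) < 2 * π by linarith)]
    nlinarith

/-- Discrete square relation: the angle increments around a quadrilateral agree. -/
lemma square_rel {a b c d : ℂ} (ha : a ≠ 0) (hb : b ≠ 0) (hc : c ≠ 0) (hd : d ≠ 0)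
    (h1 : 0 < (b / a).re) (h2 : 0 < (c / b).re)
    (h3 : 0 < (d / a).re) (h4 : 0 < (c / d).re) :
    dtheta a b + dtheta b c = dtheta a d + dtheta d c := by
  have hL : Complex.exp (((dtheta a b + dtheta b c) : ℝ) * I) * unitc a = unitc c := by
    push_cast
    rw [add_mul, Complex.exp_add]
    have s1 := unit_step ha hb
    have s2 := unit_step hb hc
    calc Complex.exp ((dtheta a b : ℝ) * I) * Complex.exp ((dtheta b c : ℝ) * I) * unitc a
        = (unitc a * Complex.exp ((dtheta a b : ℝ) * I)) * Complex.exp ((dtheta b c : ℝ) * I) := by ring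
      _ = unitc b * Complex.exp ((dtheta b c : ℝ) * I) := by rw [s1]
      _ = unitc c := s2
  have hR : Complex.exp (((dtheta a d + dtheta d c) : ℝ) * I) * unitc a = unitc c := by
    push_cast
    rw [add_mul, Complex.exp_add]
    have s1 := unit_step ha hd
    have s2 := unit_step hd hc
    calc Complex.exp ((dtheta a d : ℝ) * I) * Complex.exp ((dtheta d c : ℝ) * I) * unitc a
        = (unitc a * Complex.exp ((dtheta a d : ℝ) * I)) * Complex.exp ((dtheta d c : ℝ) * I) := by ring
      _ = unitc d * Complex.exp ((dtheta d c : ℝ) * I) := by rw [s1]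
      _ = unitc c := s2
  have hE : Complex.exp (((dtheta a b + dtheta b c) : ℝ) * I)
      = Complex.exp (((dtheta a d + dtheta d c) : ℝ) * I) :=
    mul_right_cancel₀ (unitc_ne_zero ha) (hL.trans hR.symm)
  have hone : Complex.exp ((((dtheta a b + dtheta b c) - (dtheta a d + dtheta d c)) : ℝ) * I)
      = 1 := by
    rw [show ((((dtheta a b + dtheta b c) - (dtheta a d + dtheta d c)) : ℝ) : ℂ) * I
        = (((dtheta a b + dtheta b c : ℝ)) : ℂ) * I - (((dtheta a d + dtheta d c : ℝ)) : ℂ) * I by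
      push_cast; ring]
    rw [Complex.exp_sub, hE]
    exact div_self (Complex.exp_ne_zero _)
  have b1 := abs_lt.1 (abs_dtheta_lt h1)
  have b2 := abs_lt.1 (abs_dtheta_lt h2)
  have b3 := abs_lt.1 (abs_dtheta_lt h3)
  have b4 := abs_lt.1 (abs_dtheta_lt h4)
  have := exp_real_eq_one hone (by rw [abs_lt]; constructor <;> linarith)
  linarith

/-- One row of telescoping. -/
lemma row_rel (A : ℕ) (zb zt : ℕ → ℂ)
    (hb0 : ∀ i, i ≤ A → zb i ≠ 0) (ht0 : ∀ i, i ≤ A → zt i ≠ 0)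
    (hbadj : ∀ i, i < A → 0 < (zb (i + 1) / zb i).re)
    (htadj : ∀ i, i < A → 0 < (zt (i + 1) / zt i).re)
    (hv : ∀ i, i ≤ A → 0 < (zt i / zb i).re) :
    (∑ i ∈ Finset.range A, dtheta (zt i) (zt (i + 1))) + dtheta (zb 0) (zt 0)
      = (∑ i ∈ Finset.range A, dtheta (zb i) (zb (i + 1))) + dtheta (zb A) (zt A) := by
  induction A with
  | zero => simp
  | succ A ih =>
    have hstep := square_rel (hb0 A (by omega)) (hb0 (A+1) (by omega)) (ht0 (A+1) (by omega))
      (ht0 A (by omega)) (hbadj A (by omega)) (hv (A+1) (by omega)) (hv A (by omega))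
      (htadj A (by omega))
    have := ih (fun i hi => hb0 i (by omega)) (fun i hi => ht0 i (by omega))
      (fun i hi => hbadj i (by omega)) (fun i hi => htadj i (by omega))
      (fun i hi => hv i (by omega))
    rw [Finset.sum_range_succ, Finset.sum_range_succ]
    linarith

lemma cos_unitc {w : ℂ} (hw : w ≠ 0) {θ : ℝ}
    (hθ : Complex.exp ((θ : ℝ) * I) = unitc w) :
    Real.cos θ = w.re / ‖w‖ ∧ Real.sin θ = w.im / ‖w‖ := by
  have h1 : (Complex.exp ((θ : ℝ) * I)).re = Real.cos θ := Complex.exp_ofReal_mul_I_re θ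
  have h2 : (Complex.exp ((θ : ℝ) * I)).im = Real.sin θ := Complex.exp_ofReal_mul_I_im θ
  have ha : (‖w‖) ≠ 0 := (norm_ne_zero_iff.mpr hw)
  have hre : (unitc w).re = w.re / ‖w‖ := by
    rw [unitc, Complex.div_ofReal_re]
  have him : (unitc w).im = w.im / ‖w‖ := by
    rw [unitc, Complex.div_ofReal_im]
  rw [hθ] at h1 h2
  exact ⟨by rw [← h1, hre], by rw [← h2, him]⟩

/-- Construct an initial angle lift in `[-π, -π/2]` for a vector in the closed
third quadrant. -/
lemma exists_theta_Q3 {w : ℂ} (hw : w ≠ 0) (hre : w.re ≤ 0) (him : w.im ≤ 0) :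
    ∃ θ : ℝ, Complex.exp ((θ : ℝ) * I) = unitc w ∧ -π ≤ θ ∧ θ ≤ -(π / 2) := by
  have hexp : Complex.exp ((w.arg : ℝ) * I) = unitc w := (unitc_eq_exp hw).symm
  have hpi := Real.pi_pos
  by_cases hp : w.arg = π
  · refine ⟨-π, ?_, le_refl _, by linarith⟩
    rw [hp] at hexp
    have h1 : Complex.exp (((-π : ℝ) : ℂ) * I) = -1 := by
      push_cast
      rw [neg_mul, Complex.exp_neg, Complex.exp_pi_mul_I]
      norm_num
    rw [h1, ← hexp, Complex.exp_pi_mul_I]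
  · refine ⟨w.arg, hexp, (Complex.neg_pi_lt_arg w).le, ?_⟩
    obtain ⟨hcos, hsin⟩ := cos_unitc hw hexp
    have habs : 0 < ‖w‖ := norm_pos_iff.mpr hw
    have hc : Real.cos w.arg ≤ 0 := by rw [hcos]; exact div_nonpos_of_nonpos_of_nonneg hre habs.le
    have hs : Real.sin w.arg ≤ 0 := by rw [hsin]; exact div_nonpos_of_nonpos_of_nonneg him habs.le
    by_contra hgt
    push_neg at hgt
    rcases lt_or_ge w.arg (π / 2) with h | h
    · have : 0 < Real.cos w.arg := Real.cos_pos_of_mem_Ioo ⟨by linarith, h⟩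
      linarith
    · have harg := Complex.arg_le_pi w
      have hlt : w.arg < π := lt_of_le_of_ne harg hp
      have : 0 < Real.sin w.arg := Real.sin_pos_of_pos_of_lt_pi (by linarith) hlt
      linarith

lemma refine_Q4 {θ : ℝ} (h1 : -π ≤ θ) (h2 : θ ≤ 0) (hc : 0 ≤ Real.cos θ) : -(π/2) ≤ θ := by
  by_contra h
  push_neg at h
  have hpi := Real.pi_pos
  have : Real.cos (-θ) < 0 :=
    Real.cos_neg_of_pi_div_two_lt_of_lt (by linarith) (by linarith)
  rw [Real.cos_neg] at this; linarith

lemma refine_Q1 {θ : ℝ} (h1 : -(π/2) ≤ θ) (h2 : θ ≤ π/2) (hs : 0 ≤ Real.sin θ) : 0 ≤ θ := by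
  by_contra h
  push_neg at h
  have hpi := Real.pi_pos
  have : Real.sin θ < 0 := Real.sin_neg_of_neg_of_neg_pi_lt h (by linarith)
  linarith

lemma refine_Q2 {θ : ℝ} (h1 : 0 ≤ θ) (h2 : θ ≤ π) (hc : Real.cos θ ≤ 0) : π/2 ≤ θ := by
  by_contra h
  push_neg at h
  have hpi := Real.pi_pos
  have : 0 < Real.cos θ := Real.cos_pos_of_mem_Ioo ⟨by linarith, h⟩
  linarith

lemma refine_Q3 {θ : ℝ} (h1 : π/2 ≤ θ) (h2 : θ ≤ π + π/2) (hs : Real.sin θ ≤ 0) : π ≤ θ := by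
  by_contra h
  push_neg at h
  have hpi := Real.pi_pos
  have : 0 < Real.sin θ := Real.sin_pos_of_pos_of_lt_pi (by linarith) h
  linarith

lemma half_re (w : ℂ) (α : ℝ) :
    (w * Complex.exp (-(α : ℂ) * I)).re = w.re * Real.cos α + w.im * Real.sin α := by
  rw [show (-(α : ℂ) * I) = (((-α : ℝ) : ℂ) * I) by push_cast; ring]
  rw [Complex.mul_re, Complex.exp_ofReal_mul_I_re, Complex.exp_ofReal_mul_I_im]
  rw [Real.cos_neg, Real.sin_neg]
  ring

/-- Core discrete "no crossing" lemma: a grid of nonzero complex numbers with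
small adjacent angle increments cannot satisfy the four boundary sign conditions. -/
theorem core_grid (A B : ℕ) (z : ℕ → ℕ → ℂ)
    (hz : ∀ i ≤ A, ∀ j ≤ B, z i j ≠ 0)
    (hH : ∀ i < A, ∀ j ≤ B, 0 < (z (i+1) j / z i j).re)
    (hV : ∀ i ≤ A, ∀ j < B, 0 < (z i (j+1) / z i j).re)
    (hleft : ∀ j ≤ B, (z 0 j).re ≤ 0)
    (hright : ∀ j ≤ B, 0 ≤ (z A j).re)
    (hbot : ∀ i ≤ A, (z i 0).im ≤ 0)
    (htop : ∀ i ≤ A, 0 ≤ (z i B).im) : False := by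
  have hpi := Real.pi_pos
  -- telescoping: total winding around the boundary is zero
  have tele : ∀ j ≤ B,
      (∑ i ∈ Finset.range A, dtheta (z i j) (z (i+1) j))
        + (∑ j' ∈ Finset.range j, dtheta (z 0 j') (z 0 (j'+1)))
      = (∑ i ∈ Finset.range A, dtheta (z i 0) (z (i+1) 0))
        + (∑ j' ∈ Finset.range j, dtheta (z A j') (z A (j'+1))) := by
    intro j hj
    induction j with
    | zero => simp
    | succ j ihj =>
      have ihj' := ihj (by omega)
      have hrow := row_rel A (fun i => z i j) (fun i => z i (j+1))
        (fun i hi => hz i hi j (by omega)) (fun i hi => hz i hi (j+1) (by omega))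
        (fun i hi => hH i hi j (by omega)) (fun i hi => hH i hi (j+1) (by omega))
        (fun i hi => hV i hi j (by omega))
      rw [Finset.sum_range_succ, Finset.sum_range_succ]
      linarith
  have tele0 := tele B (le_refl B)
  -- boundary winding computation via the four sides
  -- abbreviations
  set S1 := ∑ i ∈ Finset.range A, dtheta (z i 0) (z (i+1) 0) with hS1
  set S2 := ∑ j ∈ Finset.range B, dtheta (z A j) (z A (j+1)) with hS2
  set HB := ∑ i ∈ Finset.range A, dtheta (z i B) (z (i+1) B) with hHB
  set V0 := ∑ j ∈ Finset.range B, dtheta (z 0 j) (z 0 (j+1)) with hV0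
  -- initial lift at corner (0,0)
  obtain ⟨θ0, hθ0, hθ0a, hθ0b⟩ := exists_theta_Q3 (hz 0 (by omega) 0 (by omega))
    (hleft 0 (by omega)) (hbot 0 (by omega))
  -- side 1 : bottom, α = -π/2
  obtain ⟨e1, b1a, b1b⟩ := side_lemma (-(π/2)) (fun k => z k 0) A
    (fun k hk => hz k hk 0 (by omega))
    (fun k hk => hH k hk 0 (by omega))
    (fun k hk => by
      rw [half_re]
      simp only [Real.cos_neg, Real.sin_neg, Real.cos_pi_div_two, Real.sin_pi_div_two]
      have := hbot k hk
      nlinarith)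
    θ0 hθ0 (by linarith) (by linarith)
  set θ1 := θ0 + S1 with hθ1
  -- corner (A,0) : fourth quadrant
  have hr1 : -(π/2) ≤ θ1 := by
    obtain ⟨hcos, -⟩ := cos_unitc (hz A (le_refl A) 0 (by omega)) e1
    refine refine_Q4 (by linarith) (by linarith) ?_
    rw [hcos]
    exact div_nonneg (hright 0 (by omega)) (norm_nonneg _)
  -- side 2 : right, α = 0
  obtain ⟨e2, b2a, b2b⟩ := side_lemma 0 (fun k => z A k) B
    (fun k hk => hz A (le_refl A) k hk)
    (fun k hk => hV A (le_refl A) k hk)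
    (fun k hk => by
      rw [half_re]
      simp only [Real.cos_zero, Real.sin_zero]
      have := hright k hk
      nlinarith)
    θ1 e1 (by linarith) (by linarith)
  set θ2 := θ1 + S2 with hθ2
  -- corner (A,B) : first quadrant
  have hr2 : 0 ≤ θ2 := by
    obtain ⟨-, hsin⟩ := cos_unitc (hz A (le_refl A) B (le_refl B)) e2
    refine refine_Q1 (by linarith) (by linarith) ?_
    rw [hsin]
    exact div_nonneg (htop A (le_refl A)) (norm_nonneg _)
  -- side 3 : top reversed, α = π/2
  obtain ⟨e3, b3a, b3b⟩ := side_lemma (π/2) (fun k => z (A - k) B) A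
    (fun k hk => hz (A - k) (by omega) B (le_refl B))
    (fun k hk => by
      have h := hH (A - k - 1) (by omega) B (le_refl B)
      have hik : A - k - 1 + 1 = A - k := by omega
      rw [hik] at h
      have hik2 : A - (k + 1) = A - k - 1 := by omega
      simp only [hik2]
      exact ratio_rev_pos h)
    (fun k hk => by
      rw [half_re]
      simp only [Real.cos_pi_div_two, Real.sin_pi_div_two]
      have := htop (A - k) (by omega)
      nlinarith)
    θ2 (by simpa using e2) (by linarith) (by linarith)
  set S3 := ∑ k ∈ Finset.range A, dtheta (z (A - k) B) (z (A - (k+1)) B) with hS3m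
  set θ3 := θ2 + S3 with hθ3
  -- corner (0,B) : second quadrant
  have he3' : Complex.exp ((θ3 : ℝ) * I) = unitc (z 0 B) := by
    simpa only [Nat.sub_self] using e3
  have hr3 : π/2 ≤ θ3 := by
    obtain ⟨hcos, -⟩ := cos_unitc (hz 0 (by omega) B (le_refl B)) he3'
    refine refine_Q2 (by linarith) (by linarith) ?_
    rw [hcos]
    exact div_nonpos_of_nonpos_of_nonneg (hleft B (le_refl B)) (norm_nonneg _)
  -- side 4 : left reversed, α = π
  obtain ⟨e4, b4a, b4b⟩ := side_lemma π (fun k => z 0 (B - k)) B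
    (fun k hk => hz 0 (by omega) (B - k) (by omega))
    (fun k hk => by
      have h := hV 0 (by omega) (B - k - 1) (by omega)
      have hik : B - k - 1 + 1 = B - k := by omega
      rw [hik] at h
      have hik2 : B - (k + 1) = B - k - 1 := by omega
      simp only [hik2]
      exact ratio_rev_pos h)
    (fun k hk => by
      rw [half_re]
      simp only [Real.cos_pi, Real.sin_pi]
      have := hleft (B - k) (by omega)
      nlinarith)
    θ3 (by simpa using he3') (by linarith) (by linarith)
  set S4 := ∑ k ∈ Finset.range B, dtheta (z 0 (B - k)) (z 0 (B - (k+1))) with hS4m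
  set θ4 := θ3 + S4 with hθ4
  -- corner (0,0) again : third quadrant
  have he4' : Complex.exp ((θ4 : ℝ) * I) = unitc (z 0 0) := by
    simpa only [Nat.sub_self] using e4
  have hr4 : π ≤ θ4 := by
    obtain ⟨-, hsin⟩ := cos_unitc (hz 0 (by omega) 0 (by omega)) he4'
    refine refine_Q3 (by linarith) (by linarith) ?_
    rw [hsin]
    exact div_nonpos_of_nonpos_of_nonneg (hbot 0 (by omega)) (norm_nonneg _)
  -- reversal identities
  have hS3 : S3 = -HB := by
    rw [hS3m, hHB]
    have h1 : ∀ k ∈ Finset.range A, dtheta (z (A - k) B) (z (A - (k+1)) B)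
        = (fun i => dtheta (z (i+1) B) (z i B)) (A - 1 - k) := by
      intro k hk
      have hk' := Finset.mem_range.1 hk
      have e1' : A - k = (A - 1 - k) + 1 := by omega
      have e2' : A - (k + 1) = A - 1 - k := by omega
      rw [e1', e2']
    rw [Finset.sum_congr rfl h1,
      Finset.sum_range_reflect (fun i => dtheta (z (i+1) B) (z i B)) A]
    rw [← Finset.sum_neg_distrib]
    refine Finset.sum_congr rfl (fun k hk => ?_)
    have hk' := Finset.mem_range.1 hk
    exact dtheta_rev (hH k hk' B (le_refl B))
  have hS4 : S4 = -V0 := by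
    rw [hS4m, hV0]
    have h1 : ∀ k ∈ Finset.range B, dtheta (z 0 (B - k)) (z 0 (B - (k+1)))
        = (fun j => dtheta (z 0 (j+1)) (z 0 j)) (B - 1 - k) := by
      intro k hk
      have hk' := Finset.mem_range.1 hk
      have e1' : B - k = (B - 1 - k) + 1 := by omega
      have e2' : B - (k + 1) = B - 1 - k := by omega
      rw [e1', e2']
    rw [Finset.sum_congr rfl h1,
      Finset.sum_range_reflect (fun j => dtheta (z 0 (j+1)) (z 0 j)) B]
    rw [← Finset.sum_neg_distrib]
    refine Finset.sum_congr rfl (fun k hk => ?_)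
    have hk' := Finset.mem_range.1 hk
    exact dtheta_rev (hV 0 (by omega) k hk')
  -- contradiction
  have : θ4 = θ0 := by
    rw [hθ4, hθ3, hθ2, hθ1, hS3, hS4]
    linarith [tele0]
  linarith
/-! ### Geometric part -/

noncomputable def psi (p : ℝ × ℝ) : ℂ := (p.1 : ℂ) + (p.2 : ℂ) * I

@[simp] lemma psi_re (p : ℝ × ℝ) : (psi p).re = p.1 := by simp [psi]
@[simp] lemma psi_im (p : ℝ × ℝ) : (psi p).im = p.2 := by simp [psi]

lemma psi_injective : Function.Injective psi := by
  intro p q h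
  have h1 : (psi p).re = (psi q).re := by rw [h]
  have h2 : (psi p).im = (psi q).im := by rw [h]
  simp at h1 h2
  exact Prod.ext h1 h2

lemma psi_affine (s t : ℝ) (a b : ℝ × ℝ) :
    psi (s • a + t • b) = s • psi a + t • psi b := by
  apply Complex.ext <;>
    simp [psi, Complex.add_re, Complex.add_im, Complex.smul_re, Complex.smul_im,
      Prod.smul_def, smul_eq_mul]

lemma psi_mem_segment {a b p : ℝ × ℝ} (h : p ∈ segment ℝ a b) :
    psi p ∈ segment ℝ (psi a) (psi b) := by
  obtain ⟨s, t, hs, ht, hst, hp⟩ := h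
  exact ⟨s, t, hs, ht, hst, by rw [← hp, psi_affine]⟩

lemma mem_segment_psi {a b : ℝ × ℝ} {x : ℂ} (h : x ∈ segment ℝ (psi a) (psi b)) :
    ∃ p ∈ segment ℝ a b, x = psi p := by
  obtain ⟨s, t, hs, ht, hst, hp⟩ := h
  exact ⟨s • a + t • b, ⟨s, t, hs, ht, hst, rfl⟩, by rw [← hp, psi_affine]⟩

lemma isCompact_segment' (x y : ℂ) : IsCompact (segment ℝ x y) := by
  rw [segment_eq_image]
  exact isCompact_Icc.image (by continuity)

lemma compact_dist {K1 K2 : Set ℂ} (h1 : IsCompact K1) (h2 : IsCompact K2)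
    (hne : K1.Nonempty) (hd : ∀ x ∈ K1, x ∉ K2) :
    ∃ m > 0, ∀ x ∈ K1, ∀ y ∈ K2, m ≤ dist x y := by
  rcases K2.eq_empty_or_nonempty with h | hne2
  · exact ⟨1, one_pos, fun x _ y hy => by rw [h] at hy; exact absurd hy (Set.notMem_empty y)⟩
  · obtain ⟨x0, hx0, hmin⟩ := h1.exists_isMinOn hne
      ((Metric.continuous_infDist_pt K2).continuousOn)
    refine ⟨Metric.infDist x0 K2, ?_, fun x hx y hy => ?_⟩
    · exact (h2.isClosed.notMem_iff_infDist_pos hne2).1 (hd x0 hx0)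
    · exact le_trans (hmin hx) (Metric.infDist_le_dist_of_mem hy)

/-- Piecewise-linear sample of the polygonal path through `vv 0, vv 1, …`. -/
noncomputable def samp (M : ℕ) (vv : ℕ → ℂ) (n : ℕ) : ℂ :=
  vv (n / M) + (((n % M : ℕ) : ℝ) / (M : ℝ)) • (vv (n / M + 1) - vv (n / M))

lemma samp_zero (M : ℕ) (vv : ℕ → ℂ) : samp M vv 0 = vv 0 := by
  simp [samp]

lemma samp_mul (M : ℕ) (hM : 0 < M) (vv : ℕ → ℂ) (k : ℕ) : samp M vv (k * M) = vv k := by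
  simp [samp, Nat.mul_div_cancel _ hM, Nat.mul_mod_left]

lemma samp_step (M : ℕ) (hM : 0 < M) (vv : ℕ → ℂ) (n : ℕ) :
    samp M vv (n + 1) - samp M vv n
      = ((M : ℝ)⁻¹) • (vv (n / M + 1) - vv (n / M)) := by
  have hMR : (M : ℝ) ≠ 0 := Nat.cast_ne_zero.2 hM.ne'
  set q := n / M with hq
  set r := n % M with hr
  have hrM : r < M := Nat.mod_lt _ hM
  have hn : n = r + q * M := by rw [hq, hr]; exact (Nat.mod_add_div' n M).symm
  rcases eq_or_lt_of_le (Nat.succ_le_of_lt hrM) with he | hlt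
  · -- r + 1 = M : joint
    have h1 : n + 1 = (q + 1) * M := by rw [hn, add_mul, one_mul]; omega
    have hdiv : (n + 1) / M = q + 1 := by rw [h1]; exact Nat.mul_div_cancel _ hM
    have hmod : (n + 1) % M = 0 := by rw [h1]; exact Nat.mul_mod_left _ _
    rw [samp, samp, hdiv, hmod, ← hq, ← hr]
    have hrR : ((r : ℝ)) = (M : ℝ) - 1 := by
      have : (r : ℝ) + 1 = (M : ℝ) := by exact_mod_cast congrArg (Nat.cast : ℕ → ℝ) he
      linarith
    rw [hrR]
    simp only [Nat.cast_zero, zero_div, zero_smul, add_zero]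
    have hMc : ((M : ℕ) : ℂ) ≠ 0 := Nat.cast_ne_zero.2 hM.ne'
    rw [Complex.real_smul, Complex.real_smul]
    push_cast
    field_simp
    ring
  · -- same edge
    have hdiv : (n + 1) / M = q := by
      rw [show n + 1 = (r + 1) + q * M by omega, Nat.add_mul_div_right _ _ hM,
        Nat.div_eq_of_lt hlt, zero_add]
    have hmod : (n + 1) % M = r + 1 := by
      rw [show n + 1 = (r + 1) + q * M by omega, Nat.add_mul_mod_self_right,
        Nat.mod_eq_of_lt hlt]
    rw [samp, samp, hdiv, hmod, ← hq, ← hr]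
    have hMc : ((M : ℕ) : ℂ) ≠ 0 := Nat.cast_ne_zero.2 hM.ne'
    rw [Complex.real_smul, Complex.real_smul, Complex.real_smul]
    push_cast
    field_simp
    ring

lemma samp_mem (M : ℕ) (hM : 0 < M) (vv : ℕ → ℂ) (k : ℕ) (hk : 0 < k) (n : ℕ)
    (hn : n ≤ k * M) :
    ∃ e < k, samp M vv n ∈ segment ℝ (vv e) (vv (e + 1)) := by
  rcases eq_or_lt_of_le hn with he | hlt
  · refine ⟨k - 1, by omega, ?_⟩
    rw [he, samp_mul M hM]
    have : k - 1 + 1 = k := by omega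
    rw [this]
    exact right_mem_segment _ _ _
  · refine ⟨n / M, (Nat.div_lt_iff_lt_mul hM).2 hlt, ?_⟩
    rw [samp]
    set t := ((n % M : ℕ) : ℝ) / (M : ℝ) with ht
    have ht0 : 0 ≤ t := by positivity
    have ht1 : t ≤ 1 := by
      rw [ht, div_le_one (by exact_mod_cast hM)]
      exact_mod_cast (Nat.mod_lt _ hM).le
    refine ⟨1 - t, t, by linarith, ht0, by ring, ?_⟩
    rw [Complex.real_smul, Complex.real_smul, Complex.real_smul]
    push_cast
    ring

/-- Data common to both kinds of crossings, after converting to ℂ. -/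
lemma path_setup {G : Set ((ℝ × ℝ) × (ℝ × ℝ))} {N : ℝ} (k : ℕ) (hk : 0 < k)
    (v : Fin (k + 1) → ℝ × ℝ)
    (hmem : ∀ i : Fin k, (v i.castSucc, v i.succ) ∈ G ∨ (v i.succ, v i.castSucc) ∈ G)
    (hbox : ∀ i : Fin k, segment ℝ (v i.castSucc) (v i.succ) ⊆ boxN N) :
    ∃ vv : ℕ → ℂ,
      (∀ e (he : e ≤ k), vv e = psi (v ⟨e, by omega⟩)) ∧
      (∀ e (he : e < k), segment ℝ (vv e) (vv (e + 1))
        = segment ℝ (psi (v (Fin.castSucc ⟨e, he⟩))) (psi (v (Fin.succ ⟨e, he⟩)))) := by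
  refine ⟨fun i => psi (v ⟨min i k, by omega⟩), ?_, ?_⟩
  · intro e he
    exact congrArg (fun t => psi (v t)) (Fin.ext (min_eq_left he))
  · intro e he
    have h1 : (⟨min e k, by omega⟩ : Fin (k + 1)) = Fin.castSucc ⟨e, he⟩ :=
      Fin.ext (min_eq_left he.le)
    have h2 : (⟨min (e + 1) k, by omega⟩ : Fin (k + 1)) = Fin.succ ⟨e, he⟩ :=
      Fin.ext (min_eq_left he)
    show segment ℝ (psi (v ⟨min e k, by omega⟩)) (psi (v ⟨min (e + 1) k, by omega⟩)) = _
    rw [h1, h2]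

/-- Blocking lemma: if no edge of `G_L` meets any edge of `G_E`, and `G_E` has
both a left-right and a top-bottom crossing of `B_N`, then `G_L` cannot have both
crossings of `B_N`. -/
theorem stmt_19 (N : ℝ) (hN : 0 < N) (Geav Gleg : Set ((ℝ × ℝ) × (ℝ × ℝ)))
    (hcross : ∀ eL ∈ Gleg, ∀ eE ∈ Geav,
      Disjoint (segment ℝ eL.1 eL.2) (segment ℝ eE.1 eE.2))
    (hE : HasLRCrossing Geav N ∧ HasTBCrossing Geav N) :
    ¬ (HasLRCrossing Gleg N ∧ HasTBCrossing Gleg N) := by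
  rintro ⟨-, hTB⟩
  obtain ⟨hLR, -⟩ := hE
  obtain ⟨kE, vE, hEG, hEbox, hE0, hEl, -, -⟩ := hLR
  obtain ⟨kL, vL, hLG, hLbox, hL0, hLl, -, -⟩ := hTB
  have hNN : -(N / 2) < N / 2 := by linarith
  have hkE : 0 < kE := by
    rcases Nat.eq_zero_or_pos kE with h | h
    · subst h
      rw [show (Fin.last 0) = 0 from rfl] at hEl
      rw [hE0] at hEl; linarith
    · exact h
  have hkL : 0 < kL := by
    rcases Nat.eq_zero_or_pos kL with h | h
    · subst h
      rw [show (Fin.last 0) = 0 from rfl] at hLl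
      rw [hL0] at hLl; linarith
    · exact h
  obtain ⟨vvE, hvvE, hsegE⟩ := path_setup kE hkE vE hEG hEbox
  obtain ⟨vvL, hvvL, hsegL⟩ := path_setup kL hkL vL hLG hLbox
  -- compact images
  set KE : Set ℂ := ⋃ e : Fin kE, segment ℝ (vvE e) (vvE (e + 1)) with hKE
  set KL : Set ℂ := ⋃ e : Fin kL, segment ℝ (vvL e) (vvL (e + 1)) with hKL
  have hKEc : IsCompact KE := isCompact_iUnion (fun e => isCompact_segment' _ _)
  have hKLc : IsCompact KL := isCompact_iUnion (fun e => isCompact_segment' _ _)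
  have hKEne : KE.Nonempty :=
    ⟨vvE 0, Set.mem_iUnion.2 ⟨⟨0, hkE⟩, left_mem_segment _ _ _⟩⟩
  -- membership in the box
  have hKEbox : ∀ x ∈ KE, -(N / 2) ≤ x.re ∧ x.re ≤ N / 2 ∧ -(N / 2) ≤ x.im ∧ x.im ≤ N / 2 := by
    intro x hx
    obtain ⟨e, hxe⟩ := Set.mem_iUnion.1 hx
    rw [hsegE e.1 e.2] at hxe
    obtain ⟨p, hp, hxp⟩ := mem_segment_psi hxe
    have := hEbox ⟨e.1, e.2⟩ hp
    obtain ⟨h1, h2⟩ := this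
    rw [hxp]
    simp only [psi_re, psi_im]
    exact ⟨h1.1, h1.2, h2.1, h2.2⟩
  have hKLbox : ∀ x ∈ KL, -(N / 2) ≤ x.re ∧ x.re ≤ N / 2 ∧ -(N / 2) ≤ x.im ∧ x.im ≤ N / 2 := by
    intro x hx
    obtain ⟨e, hxe⟩ := Set.mem_iUnion.1 hx
    rw [hsegL e.1 e.2] at hxe
    obtain ⟨p, hp, hxp⟩ := mem_segment_psi hxe
    have := hLbox ⟨e.1, e.2⟩ hp
    obtain ⟨h1, h2⟩ := this
    rw [hxp]
    simp only [psi_re, psi_im]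
    exact ⟨h1.1, h1.2, h2.1, h2.2⟩
  -- disjointness
  have hdisj : ∀ x ∈ KE, x ∉ KL := by
    intro x hxE hxL
    obtain ⟨e, hxe⟩ := Set.mem_iUnion.1 hxE
    obtain ⟨f, hxf⟩ := Set.mem_iUnion.1 hxL
    rw [hsegE e.1 e.2] at hxe
    rw [hsegL f.1 f.2] at hxf
    obtain ⟨p, hp, hxp⟩ := mem_segment_psi hxe
    obtain ⟨q, hq, hxq⟩ := mem_segment_psi hxf
    have hpq : p = q := psi_injective (hxp.symm.trans hxq)
    subst hpq
    set eF : Fin kE := ⟨e.1, e.2⟩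
    set fF : Fin kL := ⟨f.1, f.2⟩
    have hmemE := hEG eF
    have hmemL := hLG fF
    have hpE : p ∈ segment ℝ (vE eF.castSucc) (vE eF.succ) := hp
    have hpL : p ∈ segment ℝ (vL fF.castSucc) (vL fF.succ) := hq
    rcases hmemL with hL | hL <;> rcases hmemE with hE' | hE'
    · exact Set.disjoint_left.1 (hcross _ hL _ hE') hpL hpE
    · exact Set.disjoint_left.1 (hcross _ hL _ hE') hpL (by rwa [segment_symm] at hpE)
    · exact Set.disjoint_left.1 (hcross _ hL _ hE') (by rwa [segment_symm] at hpL) hpE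
    · exact Set.disjoint_left.1 (hcross _ hL _ hE')
        (by rwa [segment_symm] at hpL) (by rwa [segment_symm] at hpE)
  obtain ⟨m, hm, hmdist⟩ := compact_dist hKEc hKLc hKEne hdisj
  -- sampling parameters
  set CE : ℝ := ∑ e ∈ Finset.range kE, ‖vvE (e + 1) - vvE e‖ with hCE
  set CL : ℝ := ∑ e ∈ Finset.range kL, ‖vvL (e + 1) - vvL e‖ with hCL
  have hCEnn : 0 ≤ CE := Finset.sum_nonneg (fun _ _ => norm_nonneg _)
  have hCLnn : 0 ≤ CL := Finset.sum_nonneg (fun _ _ => norm_nonneg _)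
  have hCEbd : ∀ e < kE, ‖vvE (e + 1) - vvE e‖ ≤ CE := fun e he =>
    Finset.single_le_sum (f := fun e => ‖vvE (e + 1) - vvE e‖)
      (fun _ _ => norm_nonneg _) (Finset.mem_range.2 he)
  have hCLbd : ∀ e < kL, ‖vvL (e + 1) - vvL e‖ ≤ CL := fun e he =>
    Finset.single_le_sum (f := fun e => ‖vvL (e + 1) - vvL e‖)
      (fun _ _ => norm_nonneg _) (Finset.mem_range.2 he)
  set ME : ℕ := ⌈2 * CE / m⌉₊ + 1 with hME
  set ML : ℕ := ⌈2 * CL / m⌉₊ + 1 with hML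
  have hMEpos : 0 < ME := by omega
  have hMLpos : 0 < ML := by omega
  have hMEbig : 2 * CE ≤ m * ME := by
    have h1 : 2 * CE / m ≤ (ME : ℝ) := le_trans (Nat.le_ceil _) (by exact_mod_cast Nat.le_succ _)
    have h2 := (div_le_iff₀ hm).1 h1
    nlinarith
  have hMLbig : 2 * CL ≤ m * ML := by
    have h1 : 2 * CL / m ≤ (ML : ℝ) := le_trans (Nat.le_ceil _) (by exact_mod_cast Nat.le_succ _)
    have h2 := (div_le_iff₀ hm).1 h1
    nlinarith
  set A : ℕ := kE * ME with hA
  set B : ℕ := kL * ML with hB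
  set sE : ℕ → ℂ := samp ME vvE with hsE
  set sL : ℕ → ℂ := samp ML vvL with hsL
  -- samples lie in the compact sets
  have hsEK : ∀ n ≤ A, sE n ∈ KE := by
    intro n hn
    obtain ⟨e, he, hmem⟩ := samp_mem ME hMEpos vvE kE hkE n hn
    exact Set.mem_iUnion.2 ⟨⟨e, he⟩, hmem⟩
  have hsLK : ∀ n ≤ B, sL n ∈ KL := by
    intro n hn
    obtain ⟨e, he, hmem⟩ := samp_mem ML hMLpos vvL kL hkL n hn
    exact Set.mem_iUnion.2 ⟨⟨e, he⟩, hmem⟩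
  -- small steps
  have hstepE : ∀ n < A, ‖sE (n + 1) - sE n‖ ≤ m / 2 := by
    intro n hn
    rw [hsE, samp_step ME hMEpos]
    rw [Complex.real_smul, norm_mul, Complex.norm_real, Real.norm_eq_abs]
    have he : n / ME < kE := (Nat.div_lt_iff_lt_mul hMEpos).2 hn
    have h1 : ‖vvE (n / ME + 1) - vvE (n / ME)‖ ≤ CE := hCEbd _ he
    have h2 : |((ME : ℝ))⁻¹| = ((ME : ℝ))⁻¹ := abs_of_nonneg (by positivity)
    rw [h2]
    have hMER : (0 : ℝ) < ME := by exact_mod_cast hMEpos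
    rw [inv_mul_le_iff₀ hMER]
    calc ‖vvE (n / ME + 1) - vvE (n / ME)‖ ≤ CE := h1
      _ ≤ m * ME / 2 := by linarith
      _ = (ME : ℝ) * (m / 2) := by ring
  have hstepL : ∀ n < B, ‖sL (n + 1) - sL n‖ ≤ m / 2 := by
    intro n hn
    rw [hsL, samp_step ML hMLpos]
    rw [Complex.real_smul, norm_mul, Complex.norm_real, Real.norm_eq_abs]
    have he : n / ML < kL := (Nat.div_lt_iff_lt_mul hMLpos).2 hn
    have h1 : ‖vvL (n / ML + 1) - vvL (n / ML)‖ ≤ CL := hCLbd _ he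
    have h2 : |((ML : ℝ))⁻¹| = ((ML : ℝ))⁻¹ := abs_of_nonneg (by positivity)
    rw [h2]
    have hMLR : (0 : ℝ) < ML := by exact_mod_cast hMLpos
    rw [inv_mul_le_iff₀ hMLR]
    calc ‖vvL (n / ML + 1) - vvL (n / ML)‖ ≤ CL := h1
      _ ≤ m * ML / 2 := by linarith
      _ = (ML : ℝ) * (m / 2) := by ring
  -- the grid
  set z : ℕ → ℕ → ℂ := fun i j => sE i - sL j with hz
  have habs : ∀ i ≤ A, ∀ j ≤ B, m ≤ ‖z i j‖ := by
    intro i hi j hj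
    have := hmdist (sE i) (hsEK i hi) (sL j) (hsLK j hj)
    rwa [Complex.dist_eq] at this
  have hz0 : ∀ i ≤ A, ∀ j ≤ B, z i j ≠ 0 := by
    intro i hi j hj h0
    have := habs i hi j hj
    rw [h0] at this
    simp at this
    linarith
  have hHrat : ∀ i < A, ∀ j ≤ B, 0 < (z (i + 1) j / z i j).re := by
    intro i hi j hj
    refine ratio_re_pos (hz0 i (by omega) j hj) (hz0 (i + 1) (by omega) j hj) ?_
    have hd : z (i + 1) j - z i j = sE (i + 1) - sE i := by rw [hz]; ring
    rw [hd]
    calc ‖sE (i + 1) - sE i‖ ≤ m / 2 := hstepE i hi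
      _ < m := by linarith
      _ ≤ ‖z i j‖ := habs i (by omega) j hj
  have hVrat : ∀ i ≤ A, ∀ j < B, 0 < (z i (j + 1) / z i j).re := by
    intro i hi j hj
    refine ratio_re_pos (hz0 i hi j (by omega)) (hz0 i hi (j + 1) (by omega)) ?_
    have hd : z i (j + 1) - z i j = -(sL (j + 1) - sL j) := by rw [hz]; ring
    rw [hd]
    rw [show ‖-(sL (j + 1) - sL j)‖ = ‖sL (j + 1) - sL j‖ by rw [neg_sub]; exact norm_sub_rev _ _]
    calc ‖sL (j + 1) - sL j‖ ≤ m / 2 := hstepL j hj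
      _ < m := by linarith
      _ ≤ ‖z i j‖ := habs i hi j (by omega)
  -- endpoints
  have hsE0 : sE 0 = psi (vE 0) := by
    rw [hsE, samp_zero, hvvE 0 (by omega)]
    congr 1
  have hsEA : sE A = psi (vE (Fin.last kE)) := by
    rw [hsE, hA, samp_mul ME hMEpos, hvvE kE (le_refl kE)]
    congr 1
  have hsL0 : sL 0 = psi (vL 0) := by
    rw [hsL, samp_zero, hvvL 0 (by omega)]
    congr 1
  have hsLB : sL B = psi (vL (Fin.last kL)) := by
    rw [hsL, hB, samp_mul ML hMLpos, hvvL kL (le_refl kL)]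
    congr 1
  -- boundary sign conditions
  have hleft : ∀ j ≤ B, (z 0 j).re ≤ 0 := by
    intro j hj
    have h1 : (sE 0).re = -(N / 2) := by rw [hsE0, psi_re, hE0]
    have h2 := (hKLbox (sL j) (hsLK j hj)).1
    simp only [hz, Complex.sub_re]
    rw [h1]; linarith
  have hright : ∀ j ≤ B, 0 ≤ (z A j).re := by
    intro j hj
    have h1 : (sE A).re = N / 2 := by rw [hsEA, psi_re, hEl]
    have h2 := (hKLbox (sL j) (hsLK j hj)).2.1
    simp only [hz, Complex.sub_re]
    rw [h1]; linarith
  have hbot : ∀ i ≤ A, (z i 0).im ≤ 0 := by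
    intro i hi
    have h1 : (sL 0).im = N / 2 := by rw [hsL0, psi_im, hL0]
    have h2 := (hKEbox (sE i) (hsEK i hi)).2.2.2
    simp only [hz, Complex.sub_im]
    rw [h1]; linarith
  have htop : ∀ i ≤ A, 0 ≤ (z i B).im := by
    intro i hi
    have h1 : (sL B).im = -(N / 2) := by rw [hsLB, psi_im, hLl]
    have h2 := (hKEbox (sE i) (hsEK i hi)).2.2.1
    simp only [hz, Complex.sub_im]
    rw [h1]; linarith
  exact core_grid A B z hz0 hHrat hVrat hleft hright hbot htop
end
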